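/- With F_{μ,λ} as in the context, F_{μ,λ} commutes with the action of E: for all k ≥ 1, applying E (acting on M(μ)⊗M(λ) by E(v_i⊗v_j) = q^{λ-2j}[i]v_{i-1}⊗v_j + [j]v_i⊗v_{j-1}) to F_{μ,λ}(v_k) equals [k]·F_{μ,λ}(v_{k-1}). Equivalently, for 0 ≤ j ≤ k−1: q^{-(k-j-1)(μ-j-1)}[k choose j+1]_q (∏_{i=0}^{j}[μ-i] ∏_{i=0}^{k-j-2}[λ-i]) q^{λ-2(k-1-j)}[j+1] + q^{-(k-j)(μ-j)}[k choose j]_q (∏_{i=0}^{j-1}[μ-i] ∏_{i=0}^{k-j-1}[λ-i])[k-j] = [k] [μ+λ-k+1] q^{-(k-1-j)(μ-j)} [k-1 choose j]_q (∏_{i=0}^{j-1}[μ-i] ∏_{i=0}^{k-j-2}[λ-i]). -/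

import Mathlib

open Finset

noncomputable section

variable {K : Type*} [Field K]

def qnum (q : K) (m : ℕ) : K := (q ^ m - q⁻¹ ^ m) / (q - q⁻¹)

def qfact (q : K) : ℕ → K
  | 0 => 1
  | m + 1 => qnum q (m + 1) * qfact q m

def qbinom (q : K) (m l : ℕ) : K :=
  if l ≤ m then qfact q m / (qfact q l * qfact q (m - l)) else 0

def gq (q x : K) : K := (x - x⁻¹) / (q - q⁻¹)

/-- Coefficient of `v_j ⊗ v_{k-j}` in `F_{μ,λ}(v_k)`:
`q^{-(k-j)(μ-j)} [k choose j] ∏_{i<j}[μ-i] ∏_{i<k-j}[λ-i] / ∏_{i<k}[μ+λ-i]`,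
with `a = q^μ`, `b = q^λ`, `q^{-(k-j)(μ-j)} = a^{-(k-j)} q^{(k-j)j}`. -/
def Fcoef (q a b : K) (k j : ℕ) : K :=
  a⁻¹ ^ (k - j) * q ^ ((k - j) * j) * qbinom q k j
    * ((∏ i ∈ range j, gq q (a * q⁻¹ ^ i)) * (∏ i ∈ range (k - j), gq q (b * q⁻¹ ^ i))
        / ∏ i ∈ range k, gq q (a * b * q⁻¹ ^ i))

/-- `F_{μ,λ} : M(μ+λ) → M(μ) ⊗ M(λ)`. -/
def Fml (q a b : K) : (ℕ →₀ K) →ₗ[K] ((ℕ × ℕ) →₀ K) :=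
  Finsupp.lift ((ℕ × ℕ) →₀ K) K ℕ fun k =>
    ∑ j ∈ range (k + 1), Finsupp.single (j, k - j) (Fcoef q a b k j)

/-- `E` acting on `M(μ)⊗M(λ)`:
`E(v_i⊗v_j) = q^{λ-2j}[i] v_{i-1}⊗v_j + [j] v_i⊗v_{j-1}` (note `[0] = 0`). -/
def Etens (q b : K) : ((ℕ × ℕ) →₀ K) →ₗ[K] ((ℕ × ℕ) →₀ K) :=
  Finsupp.lift ((ℕ × ℕ) →₀ K) K (ℕ × ℕ) fun p =>
    Finsupp.single (p.1 - 1, p.2) (b * q⁻¹ ^ (2 * p.2) * qnum q p.1)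
      + Finsupp.single (p.1, p.2 - 1) (qnum q p.2)

lemma qnum_zero' (q : K) : qnum q 0 = 0 := by simp [qnum]

lemma qfact_succ' (q : K) (m : ℕ) : qfact q (m+1) = qnum q (m+1) * qfact q m := rfl

lemma qfact_eq_zero' (q : K) {i m : ℕ} (h : qnum q (i+1) = 0) (him : i + 1 ≤ m) :
    qfact q m = 0 := by
  induction m with
  | zero => omega
  | succ n ih =>
    rcases Nat.lt_or_ge (i+1) (n+1) with h1 | h1
    · rw [qfact_succ', ih (by omega), mul_zero]
    · have : i = n := by omega
      subst this
      rw [qfact_succ', h, zero_mul]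

lemma aux0' (q : K) (n j : ℕ) (h : qfact q (n+1) = 0) :
    qnum q (n+1) * qbinom q n j = 0 := by
  rw [qfact_succ'] at h
  rcases mul_eq_zero.1 h with h | h
  · rw [h, zero_mul]
  · rw [qbinom]
    split
    · rw [h, zero_div, mul_zero]
    · rw [mul_zero]

lemma L1' (q : K) (n j : ℕ) (h : j ≤ n) :
    qnum q (j+1) * qbinom q (n+1) (j+1) = qnum q (n+1) * qbinom q n j := by
  rw [qbinom, if_pos (by omega : j+1 ≤ n+1)]
  by_cases hj : qnum q (j+1) = 0
  · rw [hj, zero_mul, aux0' q n j (qfact_eq_zero' q hj (by omega))]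
  · rw [qbinom, if_pos h, qfact_succ' q j, qfact_succ' q n,
      show n+1-(j+1) = n-j from by omega, mul_div_assoc', mul_div_assoc',
      mul_assoc (qnum q (j+1))]
    exact mul_div_mul_left _ _ hj

lemma L2' (q : K) (n j : ℕ) (h : j ≤ n) :
    qnum q (n+1-j) * qbinom q (n+1) j = qnum q (n+1) * qbinom q n j := by
  rw [qbinom, if_pos (by omega : j ≤ n+1), show n + 1 - j = (n - j) + 1 from by omega]
  by_cases hj : qnum q (n-j+1) = 0
  · rw [hj, zero_mul, aux0' q n j (qfact_eq_zero' q hj (by omega))]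
  · rw [qbinom, if_pos h, qfact_succ' q (n-j), qfact_succ' q n, mul_div_assoc',
      mul_div_assoc', mul_left_comm (qfact q j)]
    exact mul_div_mul_left _ _ hj

lemma gq_key' (q a b : K) (hq : q ≠ 0) (j m : ℕ) :
    b * q⁻¹ ^ m * gq q (a * q⁻¹ ^ j) + a⁻¹ * q ^ j * gq q (b * q⁻¹ ^ m)
      = gq q (a * b * q⁻¹ ^ (j + m)) := by
  unfold gq
  rw [mul_div_assoc' (b * q⁻¹ ^ m), mul_div_assoc' (a⁻¹ * q ^ j), ← add_div]
  congr 1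
  simp only [mul_inv, inv_pow, inv_inv, pow_add]
  ring

lemma key' (q a b : K) (hq : q ≠ 0) (ha : a ≠ 0) (hb : b ≠ 0) (hqq : q - q⁻¹ ≠ 0)
    (hgen : ∀ i : ℕ, gq q (a * b * q⁻¹ ^ i) ≠ 0) (j m : ℕ) :
    Fcoef q a b (j+m+1) (j+1) * (b * q⁻¹ ^ (2*m) * qnum q (j+1))
      + Fcoef q a b (j+m+1) j * qnum q (m+1)
      = qnum q (j+m+1) * Fcoef q a b (j+m) j := by
  have h1 : qnum q (j+1) * qbinom q (j+m+1) (j+1)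
      = qnum q (j+m+1) * qbinom q (j+m) j := L1' q (j+m) j (by omega)
  have h2 : qnum q (m+1) * qbinom q (j+m+1) j
      = qnum q (j+m+1) * qbinom q (j+m) j := by
    have := L2' q (j+m) j (by omega)
    rwa [show j+m+1-j = m+1 from by omega] at this
  set Pa := ∏ i ∈ range j, gq q (a * q⁻¹ ^ i) with hPa
  set Pb := ∏ i ∈ range m, gq q (b * q⁻¹ ^ i) with hPb
  set Q := ∏ i ∈ range (j+m), gq q (a * b * q⁻¹ ^ i) with hQdef
  set g1 := gq q (a * q⁻¹ ^ j) with hg1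
  set g2 := gq q (b * q⁻¹ ^ m) with hg2
  set G := gq q (a * b * q⁻¹ ^ (j+m)) with hG
  have hQ : Q ≠ 0 := by
    rw [hQdef]
    exact Finset.prod_ne_zero_iff.2 fun i _ => hgen i
  have hGne : G ≠ 0 := hgen (j+m)
  have hsplitA : ∏ i ∈ range (j+1), gq q (a * q⁻¹ ^ i) = Pa * g1 := prod_range_succ _ _
  have hsplitB : ∏ i ∈ range (m+1), gq q (b * q⁻¹ ^ i) = Pb * g2 := prod_range_succ _ _
  have hsplitQ : ∏ i ∈ range (j+m+1), gq q (a * b * q⁻¹ ^ i) = Q * G := prod_range_succ _ _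
  have inner :
      b * q⁻¹ ^ (2*m) * (a⁻¹ ^ m * q ^ (m*(j+1)) * (Pa * g1 * Pb / (Q * G)))
        + a⁻¹ ^ (m+1) * q ^ ((m+1)*j) * (Pa * (Pb * g2) / (Q * G))
      = a⁻¹ ^ m * q ^ (m*j) * (Pa * Pb / Q) := by
    have hGsum : b * q⁻¹ ^ m * g1 + a⁻¹ * q ^ j * g2 = G := gq_key' q a b hq j m
    have hqm : q ^ m * q⁻¹ ^ m = 1 := by rw [← mul_pow, mul_inv_cancel₀ hq, one_pow]
    rw [show Pa * Pb / Q = Pa * Pb * G / (Q * G) from (mul_div_mul_right _ _ hGne).symm]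
    simp only [mul_div_assoc']
    rw [← add_div]
    congr 1
    rw [show 2*m = m+m from two_mul m, show m*(j+1) = m*j+m from by ring,
      show (m+1)*j = m*j+j from by ring, pow_add, pow_add, pow_add]
    linear_combination (b * q⁻¹^m * a⁻¹^m * q^(m*j) * Pa * Pb * g1) * hqm
      + (a⁻¹^m * q^(m*j) * Pa * Pb) * hGsum
  unfold Fcoef
  rw [show j+m+1-(j+1) = m from by omega, show j+m+1-j = m+1 from by omega,
    show j+m-j = m from by omega, hsplitA, hsplitB, hsplitQ]
  calc a⁻¹ ^ m * q ^ (m*(j+1)) * qbinom q (j+m+1) (j+1) * (Pa * g1 * Pb / (Q * G))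
        * (b * q⁻¹ ^ (2*m) * qnum q (j+1))
      + a⁻¹ ^ (m+1) * q ^ ((m+1)*j) * qbinom q (j+m+1) j * (Pa * (Pb * g2) / (Q * G))
        * qnum q (m+1)
      = (qnum q (j+1) * qbinom q (j+m+1) (j+1))
          * (b * q⁻¹ ^ (2*m) * (a⁻¹ ^ m * q ^ (m*(j+1)) * (Pa * g1 * Pb / (Q * G))))
        + (qnum q (m+1) * qbinom q (j+m+1) j)
          * (a⁻¹ ^ (m+1) * q ^ ((m+1)*j) * (Pa * (Pb * g2) / (Q * G))) := by ring
    _ = (qnum q (j+m+1) * qbinom q (j+m) j)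
          * (b * q⁻¹ ^ (2*m) * (a⁻¹ ^ m * q ^ (m*(j+1)) * (Pa * g1 * Pb / (Q * G)))
            + a⁻¹ ^ (m+1) * q ^ ((m+1)*j) * (Pa * (Pb * g2) / (Q * G))) := by
        rw [h1, h2]; ring
    _ = (qnum q (j+m+1) * qbinom q (j+m) j) * (a⁻¹ ^ m * q ^ (m*j) * (Pa * Pb / Q)) := by
        rw [inner]
    _ = qnum q (j+m+1) * (a⁻¹ ^ m * q ^ (m*j) * qbinom q (j+m) j * (Pa * Pb / Q)) := by
        ring

lemma Fml_single' (q a b : K) (k : ℕ) :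
    Fml q a b (Finsupp.single k (1 : K))
      = ∑ j ∈ range (k + 1), Finsupp.single (j, k - j) (Fcoef q a b k j) := by
  simp [Fml, Finsupp.lift_apply, Finsupp.sum_single_index]

lemma Etens_single' (q b : K) (p : ℕ × ℕ) (c : K) :
    Etens q b (Finsupp.single p c)
      = Finsupp.single (p.1 - 1, p.2) (c * (b * q⁻¹ ^ (2 * p.2) * qnum q p.1))
        + Finsupp.single (p.1, p.2 - 1) (c * qnum q p.2) := by
  rw [Etens, Finsupp.lift_apply, Finsupp.sum_single_index (by simp)]
  rw [smul_add, Finsupp.smul_single, Finsupp.smul_single, smul_eq_mul, smul_eq_mul]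

/-- `F_{μ,λ}` intertwines the `E`-actions: for `k ≥ 1`,
`E(F_{μ,λ}(v_k)) = [k] F_{μ,λ}(v_{k-1})`. -/
theorem Fml_intertwines_E (q a b : K) (hq : q ≠ 0) (ha : a ≠ 0) (hb : b ≠ 0)
    (hqq : q - q⁻¹ ≠ 0) (hgen : ∀ i : ℕ, gq q (a * b * q⁻¹ ^ i) ≠ 0)
    (k : ℕ) (hk : 1 ≤ k) :
    Etens q b (Fml q a b (Finsupp.single k (1 : K)))
      = qnum q k • Fml q a b (Finsupp.single (k - 1) (1 : K)) := by
  obtain ⟨n, rfl⟩ : ∃ n, k = n + 1 := ⟨k - 1, by omega⟩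
  rw [Fml_single', map_sum]
  simp only [Etens_single']
  rw [Finset.sum_add_distrib, Finset.sum_range_succ' _ (n+1), Finset.sum_range_succ _ (n+1)]
  simp only [Nat.sub_self, qnum_zero', mul_zero, Finsupp.single_zero, add_zero]
  rw [Nat.add_sub_cancel, Fml_single', Finset.smul_sum]
  simp only [Finsupp.smul_single, smul_eq_mul]
  rw [← Finset.sum_add_distrib]
  apply Finset.sum_congr rfl
  intro j hj
  obtain ⟨m, rfl⟩ : ∃ m, n = j + m := ⟨n - j, by have := Finset.mem_range.mp hj; omega⟩
  rw [show (j+1) - 1 = j from by omega, show j+m+1-(j+1) = m from by omega,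
    show j+m+1-j-1 = m from by omega, show j+m-j = m from by omega,
    show j+m+1-j = m+1 from by omega, ← Finsupp.single_add]
  congr 1
  exact key' q a b hq ha hb hqq hgen j m
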